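/- There is an absolute constant C > 0 such that for all p ∈ ℝ², all ξ ∈ ℝ² with |ξ| ≤ 1, and i ∈ {1,2}: (1 − |p̂|²) |ξ_i + p̂_i| / (1 + p̂·ξ)² ≤ C / (p_0² (1 + p̂·ξ)^{3/2}) and (1 − |p̂|²) |ξ₁ p̂₂ − ξ₂ p̂₁| / (1 + p̂·ξ)² ≤ C / (p_0² (1 + p̂·ξ)^{3/2}). (These are the pointwise bounds on the Glassey–Schaeffer kernels of E_T and B_T in two dimensions; they follow since 1 − |p̂|² = 1/p_0² and |ξ + p̂| and |ξ ∧ p̂| are bounded by a constant times (1 + p̂·ξ)^{1/2}.) -/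

import Mathlib

open scoped RealInnerProductSpace

/-- `p₀ = √(1 + |p|²)` for `p ∈ ℝ²`. -/
noncomputable def pZero (p : EuclideanSpace ℝ (Fin 2)) : ℝ := Real.sqrt (1 + ‖p‖ ^ 2)

/-- `p̂ = p / p₀` for `p ∈ ℝ²`. -/
noncomputable def pHat (p : EuclideanSpace ℝ (Fin 2)) : EuclideanSpace ℝ (Fin 2) :=
  (pZero p)⁻¹ • p

lemma aux_main (P t v : ℝ) (hP : 0 < P) (ht : 0 < t) (hv : 0 ≤ v)
    (h : v ^ 2 ≤ 2 * t) :
    (1 / P) * v / t ^ 2 ≤ Real.sqrt 2 / (P * t ^ ((3 : ℝ) / 2)) := by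
  have hvle : v ≤ Real.sqrt 2 * Real.sqrt t := by
    rw [← Real.sqrt_mul (by norm_num)]
    rcases eq_or_lt_of_le hv with h0 | h0
    · rw [← h0]; positivity
    · exact (Real.le_sqrt' h0).mpr h
  have key : t ^ ((3 : ℝ) / 2) * Real.sqrt t = t ^ 2 := by
    rw [← Real.rpow_natCast t 2, Real.sqrt_eq_rpow, ← Real.rpow_add ht]
    norm_num
  have h32 : (0 : ℝ) < t ^ ((3 : ℝ) / 2) := Real.rpow_pos_of_pos ht _
  have h2 : Real.sqrt 2 / (P * t ^ ((3 : ℝ) / 2))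
      = Real.sqrt 2 * Real.sqrt t / (P * t ^ 2) := by
    rw [div_eq_div_iff (by positivity) (by positivity), ← key]; ring
  have h3 : (1 / P) * v / t ^ 2 = v / (P * t ^ 2) := by
    field_simp
  rw [h2, h3]
  gcongr

theorem kernel_bounds_ET_BT_2d :
    ∃ C : ℝ, 0 < C ∧
      ∀ (p ξ : EuclideanSpace ℝ (Fin 2)), ‖ξ‖ ≤ 1 → ∀ i : Fin 2,
        (1 - ‖pHat p‖ ^ 2) * |ξ i + pHat p i| / (1 + ⟪pHat p, ξ⟫) ^ 2
            ≤ C / (pZero p ^ 2 * (1 + ⟪pHat p, ξ⟫) ^ ((3 : ℝ) / 2))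
        ∧ (1 - ‖pHat p‖ ^ 2) * |ξ 0 * pHat p 1 - ξ 1 * pHat p 0| / (1 + ⟪pHat p, ξ⟫) ^ 2
            ≤ C / (pZero p ^ 2 * (1 + ⟪pHat p, ξ⟫) ^ ((3 : ℝ) / 2)) := by
  refine ⟨Real.sqrt 2, by positivity, fun p ξ hξ i => ?_⟩
  have hp0 : 0 < pZero p := Real.sqrt_pos.mpr (by positivity)
  have hP : pZero p ^ 2 = 1 + ‖p‖ ^ 2 := Real.sq_sqrt (by positivity)
  have hhat : ‖pHat p‖ ^ 2 = ‖p‖ ^ 2 / (1 + ‖p‖ ^ 2) := by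
    rw [pHat, norm_smul, mul_pow, norm_inv, Real.norm_eq_abs, abs_of_pos hp0, inv_pow, hP]
    rw [inv_mul_eq_div]
  have hone : 1 - ‖pHat p‖ ^ 2 = 1 / pZero p ^ 2 := by
    have h1 : (0 : ℝ) < 1 + ‖p‖ ^ 2 := by positivity
    rw [hhat, hP]
    field_simp
    ring
  have hhatlt : ‖pHat p‖ ^ 2 < 1 := by
    rw [hhat, div_lt_one (by positivity)]
    nlinarith [norm_nonneg p]
  have hinner : ∀ x y : EuclideanSpace ℝ (Fin 2), ⟪x, y⟫ = x 0 * y 0 + x 1 * y 1 := by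
    intro x y
    simp [PiLp.inner_apply, Fin.sum_univ_two, RCLike.inner_apply, conj_trivial]
    ring
  have hnorm : ∀ x : EuclideanSpace ℝ (Fin 2), ‖x‖ ^ 2 = x 0 ^ 2 + x 1 ^ 2 := by
    intro x
    rw [← real_inner_self_eq_norm_sq, hinner]
    ring
  have hξ2 : ξ 0 ^ 2 + ξ 1 ^ 2 ≤ 1 := by
    rw [← hnorm]
    nlinarith [norm_nonneg ξ]
  have hb2 : pHat p 0 ^ 2 + pHat p 1 ^ 2 < 1 := by
    rw [← hnorm]; exact hhatlt
  have hs : ⟪pHat p, ξ⟫ = pHat p 0 * ξ 0 + pHat p 1 * ξ 1 := hinner _ _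
  have ht : 0 < 1 + ⟪pHat p, ξ⟫ := by
    rw [hs]
    nlinarith [sq_nonneg (ξ 0 + pHat p 0), sq_nonneg (ξ 1 + pHat p 1)]
  have hP2 : 0 < pZero p ^ 2 := by positivity
  constructor
  · rw [hone]
    apply aux_main _ _ _ hP2 ht (abs_nonneg _)
    rw [sq_abs, hs]
    have key : ∀ a0 a1 b0 b1 : ℝ, a0 ^ 2 + a1 ^ 2 ≤ 1 → b0 ^ 2 + b1 ^ 2 ≤ 1 →
        (a0 + b0) ^ 2 ≤ 2 * (1 + (b0 * a0 + b1 * a1)) := by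
      intro a0 a1 b0 b1 h1 h2
      nlinarith [sq_nonneg (a0 + b0), sq_nonneg (a1 + b1)]
    have key' : ∀ a0 a1 b0 b1 : ℝ, a0 ^ 2 + a1 ^ 2 ≤ 1 → b0 ^ 2 + b1 ^ 2 ≤ 1 →
        (a1 + b1) ^ 2 ≤ 2 * (1 + (b0 * a0 + b1 * a1)) := by
      intro a0 a1 b0 b1 h1 h2
      nlinarith [sq_nonneg (a0 + b0), sq_nonneg (a1 + b1)]
    fin_cases i
    · exact key (ξ 0) (ξ 1) (pHat p 0) (pHat p 1) hξ2 hb2.le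
    · exact key' (ξ 0) (ξ 1) (pHat p 0) (pHat p 1) hξ2 hb2.le
  · rw [hone]
    apply aux_main _ _ _ hP2 ht (abs_nonneg _)
    rw [sq_abs, hs]
    nlinarith [mul_le_one₀ hξ2 (by positivity) hb2.le,
      sq_nonneg (1 + (pHat p 0 * ξ 0 + pHat p 1 * ξ 1))]
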